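/- Let σ > 0 and let f : [0,∞) → ℝ be continuously differentiable with f(0) = 0 and f(x) → 0 as x → ∞. Then ∫₀^∞ (1+x)^{-1-2σ} f(x)² dx ≤ σ^{-2} ∫₀^∞ (1+x)^{1-2σ} f'(x)² dx (both integrals allowed to be infinite). -/

import Mathlib

open Set MeasureTheory Filter


private lemma amgm_aux (σ a b : ℝ) (hσ : 0 < σ) :
    (1/σ) * (a * b) ≤ (1/2) * a^2 + (1/(2*σ^2)) * b^2 := by
  have hs2 : (0:ℝ) < 2*σ^2 := by positivity
  have key : (1/2) * a^2 + (1/(2*σ^2)) * b^2 - (1/σ) * (a * b)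
      = (σ*a - b)^2 / (2*σ^2) := by
    field_simp
    ring
  nlinarith [div_nonneg (sq_nonneg (σ*a - b)) hs2.le]

private lemma key_interval (σ : ℝ) (hσ : 0 < σ) (f f' : ℝ → ℝ)
    (hderiv : ∀ x ∈ Ici (0:ℝ), HasDerivWithinAt f (f' x) (Ici 0) x)
    (hcont : ContinuousOn f' (Ici 0))
    (hf0 : f 0 = 0) (R : ℝ) (hR : 0 ≤ R) :
    ∫ x in (0:ℝ)..R, (1 + x) ^ (-1 - 2*σ) * (f x)^2
      ≤ σ ^ (-2 : ℝ) * ∫ x in (0:ℝ)..R, (1 + x) ^ (1 - 2*σ) * (f' x)^2 := by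
  have hσ' : σ ≠ 0 := hσ.ne'
  have hfc : ContinuousOn f (Ici 0) := fun x hx => (hderiv x hx).continuousWithinAt
  have hpos : ∀ x : ℝ, x ∈ Ici (0:ℝ) → (0:ℝ) < 1 + x := by
    intro x hx; simp only [mem_Ici] at hx; linarith
  have hrc : ∀ e : ℝ, ContinuousOn (fun x : ℝ => (1 + x) ^ e) (Ici 0) := by
    intro e
    exact (continuous_const.add continuous_id).continuousOn.rpow_const
      (fun x hx => Or.inl (hpos x hx).ne')
  have hIcc : Icc (0:ℝ) R ⊆ Ici 0 := Icc_subset_Ici_self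
  have huIcc : uIcc (0:ℝ) R = Icc 0 R := uIcc_of_le hR
  -- continuity of the pieces on Icc 0 R
  have cg : ContinuousOn (fun x => (1 + x) ^ (-1 - 2*σ) * (f x)^2) (Ici 0) :=
    (hrc _).mul (hfc.pow 2)
  have ch : ContinuousOn (fun x => (1 + x) ^ (1 - 2*σ) * (f' x)^2) (Ici 0) :=
    (hrc _).mul (hcont.pow 2)
  have cψ : ContinuousOn (fun x => (1/σ) * ((1 + x) ^ (-2*σ) * (f x * f' x))) (Ici 0) :=
    continuousOn_const.mul ((hrc _).mul (hfc.mul hcont))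
  have ig : IntervalIntegrable (fun x => (1 + x) ^ (-1 - 2*σ) * (f x)^2) volume 0 R :=
    (cg.mono (huIcc ▸ hIcc)).intervalIntegrable
  have ih : IntervalIntegrable (fun x => (1 + x) ^ (1 - 2*σ) * (f' x)^2) volume 0 R :=
    (ch.mono (huIcc ▸ hIcc)).intervalIntegrable
  have iψ : IntervalIntegrable (fun x => (1/σ) * ((1 + x) ^ (-2*σ) * (f x * f' x))) volume 0 R :=
    (cψ.mono (huIcc ▸ hIcc)).intervalIntegrable
  -- integration by parts via FTC
  set F : ℝ → ℝ := fun x => (f x)^2 * (-(1/(2*σ)) * (1 + x) ^ (-2*σ)) with hF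
  set φ : ℝ → ℝ := fun x =>
    (1 + x) ^ (-1 - 2*σ) * (f x)^2 - (1/σ) * ((1 + x) ^ (-2*σ) * (f x * f' x)) with hφ
  have hFc : ContinuousOn F (Icc 0 R) :=
    ((hfc.pow 2).mul (continuousOn_const.mul (hrc _))).mono hIcc
  have hφint : IntervalIntegrable φ volume 0 R := ig.sub iψ
  have hFd : ∀ x ∈ Ioo (0:ℝ) R, HasDerivWithinAt F (φ x) (Ioi x) x := by
    intro x hx
    have hx0 : (0:ℝ) < x := hx.1
    have h1x : (0:ℝ) < 1 + x := by linarith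
    have hfx : HasDerivAt f (f' x) x :=
      (hderiv x hx0.le).hasDerivAt (Ici_mem_nhds hx0)
    have h1 : HasDerivAt (fun y : ℝ => 1 + y) 1 x := by
      simpa using (hasDerivAt_id x).const_add (1:ℝ)
    have h2 : HasDerivAt (fun y : ℝ => (1 + y) ^ (-2*σ))
        ((-2*σ) * (1 + x) ^ (-2*σ - 1) * 1) x :=
      (Real.hasDerivAt_rpow_const (Or.inl h1x.ne')).comp x h1
    have hD : HasDerivAt F
        ((↑2 * f x ^ (2-1) * f' x) * (-(1/(2*σ)) * (1 + x) ^ (-2*σ))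
          + (f x)^2 * (-(1/(2*σ)) * ((-2*σ) * (1 + x) ^ (-2*σ - 1) * 1))) x :=
      (hfx.pow 2).mul (h2.const_mul _)
    have heq : (↑2 * f x ^ (2-1) * f' x) * (-(1/(2*σ)) * (1 + x) ^ (-2*σ))
          + (f x)^2 * (-(1/(2*σ)) * ((-2*σ) * (1 + x) ^ (-2*σ - 1) * 1)) = φ x := by
      have hexp : (-2*σ - 1 : ℝ) = -1 - 2*σ := by ring
      rw [hexp]
      simp only [hφ]
      field_simp
      ring
    exact (heq ▸ hD).hasDerivWithinAt
  have hIBP : ∫ x in (0:ℝ)..R, φ x = F R - F 0 :=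
    intervalIntegral.integral_eq_sub_of_hasDeriv_right_of_le hR hFc hFd hφint
  have hF0 : F 0 = 0 := by simp [hF, hf0]
  have hFR : F R ≤ 0 := by
    have h1R : (0:ℝ) < 1 + R := by linarith
    have : (0:ℝ) ≤ (1 + R) ^ (-2*σ) := (Real.rpow_pos_of_pos h1R _).le
    have := mul_nonneg (sq_nonneg (f R)) (mul_nonneg (by positivity : (0:ℝ) ≤ 1/(2*σ)) this)
    simp only [hF]
    nlinarith
  -- split
  have hsplit : ∫ x in (0:ℝ)..R, (1 + x) ^ (-1 - 2*σ) * (f x)^2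
      = (F R - F 0) + ∫ x in (0:ℝ)..R, (1/σ) * ((1 + x) ^ (-2*σ) * (f x * f' x)) := by
    rw [← hIBP, ← intervalIntegral.integral_add hφint iψ]
    congr 1
    funext x
    simp only [hφ]; ring
  -- pointwise bound
  have hpt : ∀ x ∈ Icc (0:ℝ) R, (1/σ) * ((1 + x) ^ (-2*σ) * (f x * f' x))
      ≤ (1/2) * ((1 + x) ^ (-1 - 2*σ) * (f x)^2)
        + (1/(2*σ^2)) * ((1 + x) ^ (1 - 2*σ) * (f' x)^2) := by
    intro x hx
    have h1x : (0:ℝ) < 1 + x := hpos x (hIcc hx)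
    set a := (1 + x) ^ ((-1 - 2*σ)/2) * f x with ha
    set b := (1 + x) ^ ((1 - 2*σ)/2) * f' x with hb
    have e1 : (1 + x) ^ ((-1 - 2*σ)/2) * (1 + x) ^ ((-1 - 2*σ)/2) = (1 + x) ^ (-1 - 2*σ) := by
      rw [← Real.rpow_add h1x]; ring_nf
    have e2 : (1 + x) ^ ((1 - 2*σ)/2) * (1 + x) ^ ((1 - 2*σ)/2) = (1 + x) ^ (1 - 2*σ) := by
      rw [← Real.rpow_add h1x]; ring_nf
    have e3 : (1 + x) ^ ((-1 - 2*σ)/2) * (1 + x) ^ ((1 - 2*σ)/2) = (1 + x) ^ (-2*σ) := by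
      rw [← Real.rpow_add h1x]; ring_nf
    have ha2 : a^2 = (1 + x) ^ (-1 - 2*σ) * (f x)^2 := by
      simp only [ha]; rw [← e1]; ring
    have hb2 : b^2 = (1 + x) ^ (1 - 2*σ) * (f' x)^2 := by
      simp only [hb]; rw [← e2]; ring
    have hab : a * b = (1 + x) ^ (-2*σ) * (f x * f' x) := by
      simp only [ha, hb]; rw [← e3]; ring
    rw [← ha2, ← hb2, ← hab]
    exact amgm_aux σ a b hσ
  have hrhsint : IntervalIntegrable (fun x =>
      (1/2) * ((1 + x) ^ (-1 - 2*σ) * (f x)^2)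
        + (1/(2*σ^2)) * ((1 + x) ^ (1 - 2*σ) * (f' x)^2)) volume 0 R :=
    (ig.const_mul _).add (ih.const_mul _)
  have hmono := intervalIntegral.integral_mono_on hR iψ hrhsint hpt
  rw [intervalIntegral.integral_add (ig.const_mul _) (ih.const_mul _),
    intervalIntegral.integral_const_mul, intervalIntegral.integral_const_mul,
    intervalIntegral.integral_const_mul] at hmono
  rw [intervalIntegral.integral_const_mul] at hsplit
  have hrw : σ ^ (-2 : ℝ) = 1/σ^2 := by
    rw [show (-2:ℝ) = -((2:ℕ):ℝ) by norm_num, Real.rpow_neg hσ.le, Real.rpow_natCast]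
    simp [one_div]
  rw [hrw]
  have h2 : (1:ℝ)/σ^2 = 2*(1/(2*σ^2)) := by field_simp
  have h3 : (1:ℝ)/σ^2 * (∫ x in (0:ℝ)..R, (1 + x) ^ (1 - 2*σ) * (f' x)^2)
      = 2*((1/(2*σ^2)) * (∫ x in (0:ℝ)..R, (1 + x) ^ (1 - 2*σ) * (f' x)^2)) := by
    rw [h2]; ring
  linarith [hsplit, hmono, hFR, hF0, h3]

/-- Weighted Hardy-type inequality: for `σ > 0` and `f` continuously differentiable on
`[0,∞)` with `f 0 = 0` and `f x → 0` as `x → ∞`,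
`∫₀^∞ (1+x)^{-1-2σ} f² ≤ σ^{-2} ∫₀^∞ (1+x)^{1-2σ} (f')²` (integrals may be infinite). -/
theorem stmt_0 (σ : ℝ) (hσ : 0 < σ) (f f' : ℝ → ℝ)
    (hderiv : ∀ x ∈ Ici (0:ℝ), HasDerivWithinAt f (f' x) (Ici 0) x)
    (hcont : ContinuousOn f' (Ici 0))
    (hf0 : f 0 = 0)
    (hlim : Tendsto f atTop (nhds 0)) :
    ∫⁻ x in Ioi (0:ℝ), ENNReal.ofReal ((1 + x) ^ (-1 - 2*σ) * (f x)^2)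
      ≤ ENNReal.ofReal (σ ^ (-2 : ℝ)) *
        ∫⁻ x in Ioi (0:ℝ), ENNReal.ofReal ((1 + x) ^ (1 - 2*σ) * (f' x)^2) := by
  have hfc : ContinuousOn f (Ici 0) := fun x hx => (hderiv x hx).continuousWithinAt
  have hpos : ∀ x : ℝ, x ∈ Ici (0:ℝ) → (0:ℝ) < 1 + x := by
    intro x hx; simp only [mem_Ici] at hx; linarith
  have hrc : ∀ e : ℝ, ContinuousOn (fun x : ℝ => (1 + x) ^ e) (Ici 0) := by
    intro e
    exact (continuous_const.add continuous_id).continuousOn.rpow_const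
      (fun x hx => Or.inl (hpos x hx).ne')
  set g : ℝ → ℝ := fun x => (1 + x) ^ (-1 - 2*σ) * (f x)^2 with hg
  set h : ℝ → ℝ := fun x => (1 + x) ^ (1 - 2*σ) * (f' x)^2 with hh
  have cg : ContinuousOn g (Ici 0) := (hrc _).mul (hfc.pow 2)
  have ch : ContinuousOn h (Ici 0) := (hrc _).mul (hcont.pow 2)
  have hgnn : ∀ x, x ∈ Ici (0:ℝ) → 0 ≤ g x := fun x hx =>
    mul_nonneg (Real.rpow_pos_of_pos (hpos x hx) _).le (sq_nonneg _)
  have hhnn : ∀ x, x ∈ Ici (0:ℝ) → 0 ≤ h x := fun x hx =>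
    mul_nonneg (Real.rpow_pos_of_pos (hpos x hx) _).le (sq_nonneg _)
  set G : ℝ → ENNReal := fun x => ENNReal.ofReal (g x) with hG
  set H : ℝ → ENNReal := fun x => ENNReal.ofReal (h x) with hH
  have hGmeas : AEMeasurable G ((volume : Measure ℝ).restrict (Ioi 0)) := by
    have : AEMeasurable g ((volume : Measure ℝ).restrict (Ioi 0)) :=
      (cg.aemeasurable measurableSet_Ici).mono_measure
        (Measure.restrict_mono Ioi_subset_Ici_self le_rfl)
    exact ENNReal.measurable_ofReal.comp_aemeasurable this
  -- the integrals over Ioc 0 n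
  have hInt : ∀ n : ℕ,
      ∫⁻ x in Ioc (0:ℝ) (n:ℝ), G x ≤ ENNReal.ofReal (σ ^ (-2 : ℝ)) *
        ∫⁻ x in Ioi (0:ℝ), H x := by
    intro n
    have hn : (0:ℝ) ≤ (n:ℝ) := n.cast_nonneg
    have hgi : IntegrableOn g (Ioc (0:ℝ) (n:ℝ)) volume :=
      ((cg.mono (Icc_subset_Ici_self : Icc (0:ℝ) (n:ℝ) ⊆ Ici 0)).integrableOn_Icc).mono_set
        Ioc_subset_Icc_self
    have hhi : IntegrableOn h (Ioc (0:ℝ) (n:ℝ)) volume :=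
      ((ch.mono (Icc_subset_Ici_self : Icc (0:ℝ) (n:ℝ) ⊆ Ici 0)).integrableOn_Icc).mono_set
        Ioc_subset_Icc_self
    have hg_ae : 0 ≤ᶠ[ae ((volume : Measure ℝ).restrict (Ioc 0 (n:ℝ)))] g := by
      filter_upwards [ae_restrict_mem measurableSet_Ioc] with x hx
      exact hgnn x (le_of_lt hx.1)
    have hh_ae : 0 ≤ᶠ[ae ((volume : Measure ℝ).restrict (Ioc 0 (n:ℝ)))] h := by
      filter_upwards [ae_restrict_mem measurableSet_Ioc] with x hx
      exact hhnn x (le_of_lt hx.1)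
    have e1 : ∫⁻ x in Ioc (0:ℝ) (n:ℝ), G x = ENNReal.ofReal (∫ x in Ioc (0:ℝ) (n:ℝ), g x) :=
      (ofReal_integral_eq_lintegral_ofReal hgi hg_ae).symm
    have e2 : ENNReal.ofReal (∫ x in Ioc (0:ℝ) (n:ℝ), h x) = ∫⁻ x in Ioc (0:ℝ) (n:ℝ), H x :=
      ofReal_integral_eq_lintegral_ofReal hhi hh_ae
    have key := key_interval σ hσ f f' hderiv hcont hf0 (n:ℝ) hn
    rw [intervalIntegral.integral_of_le hn, intervalIntegral.integral_of_le hn] at key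
    calc ∫⁻ x in Ioc (0:ℝ) (n:ℝ), G x
        = ENNReal.ofReal (∫ x in Ioc (0:ℝ) (n:ℝ), g x) := e1
      _ ≤ ENNReal.ofReal (σ ^ (-2 : ℝ) * ∫ x in Ioc (0:ℝ) (n:ℝ), h x) :=
          ENNReal.ofReal_le_ofReal key
      _ = ENNReal.ofReal (σ ^ (-2 : ℝ)) * ENNReal.ofReal (∫ x in Ioc (0:ℝ) (n:ℝ), h x) :=
          ENNReal.ofReal_mul (Real.rpow_nonneg hσ.le _)
      _ = ENNReal.ofReal (σ ^ (-2 : ℝ)) * ∫⁻ x in Ioc (0:ℝ) (n:ℝ), H x := by rw [e2]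
      _ ≤ ENNReal.ofReal (σ ^ (-2 : ℝ)) * ∫⁻ x in Ioi (0:ℝ), H x := by
          gcongr
          exact Ioc_subset_Ioi_self
  -- monotone convergence
  have hsup : ∫⁻ x in Ioi (0:ℝ), G x = ⨆ n : ℕ, ∫⁻ x in Ioc (0:ℝ) (n:ℝ), G x := by
    have step1 : ∫⁻ x in Ioi (0:ℝ), G x
        = ∫⁻ x in Ioi (0:ℝ), ⨆ n : ℕ, (Ioc (0:ℝ) (n:ℝ)).indicator G x := by
      refine lintegral_congr_ae ?_
      filter_upwards [ae_restrict_mem measurableSet_Ioi] with x hx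
      obtain ⟨n, hn⟩ := exists_nat_ge x
      have hmem : x ∈ Ioc (0:ℝ) (n:ℝ) := ⟨hx, hn⟩
      refine le_antisymm ?_ (iSup_le fun m => Set.indicator_le_self' (fun _ _ => zero_le) x)
      calc G x = (Ioc (0:ℝ) (n:ℝ)).indicator G x :=
            (Set.indicator_of_mem hmem G).symm
        _ ≤ ⨆ n : ℕ, (Ioc (0:ℝ) (n:ℝ)).indicator G x :=
            le_iSup (fun n : ℕ => (Ioc (0:ℝ) (n:ℝ)).indicator G x) n
    have step2 : ∫⁻ x in Ioi (0:ℝ), ⨆ n : ℕ, (Ioc (0:ℝ) (n:ℝ)).indicator G x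
        = ⨆ n : ℕ, ∫⁻ x in Ioi (0:ℝ), (Ioc (0:ℝ) (n:ℝ)).indicator G x := by
      refine lintegral_iSup' (fun n => hGmeas.indicator measurableSet_Ioc) ?_
      refine Eventually.of_forall fun x m n hmn => ?_
      exact Set.indicator_le_indicator_of_subset
        (Ioc_subset_Ioc le_rfl (by exact_mod_cast hmn)) (fun _ => zero_le) x
    have step3 : ∀ n : ℕ, ∫⁻ x in Ioi (0:ℝ), (Ioc (0:ℝ) (n:ℝ)).indicator G x
        = ∫⁻ x in Ioc (0:ℝ) (n:ℝ), G x := by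
      intro n
      rw [lintegral_indicator measurableSet_Ioc,
        Measure.restrict_restrict measurableSet_Ioc,
        Set.inter_eq_left.mpr Ioc_subset_Ioi_self]
    rw [step1, step2]
    exact iSup_congr step3
  rw [hsup]
  exact iSup_le hInt
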